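/- For every floating-point system S (a finite set of rationals representable as ±0.d₁⋯d_p × β^e with digits 0 ≤ d_i ≤ β−1 and exponent e ∈ [−n, n], equipped with rounding addition), there exists k ∈ ℕ such that for every finite multiset M of elements of S, the sum of M computed in increasing order equals the sum of the k-projection of M (the multiset obtained by capping each multiplicity at k) computed in increasing order. -/

import Mathlib

/-- The set of rationals representable as `±0.d₁⋯d_p × β^e` with digits `0 ≤ dᵢ ≤ β−1`
and exponent `e ∈ [−n, n]`, i.e. rationals of the form `(m / β^p) * β^e` with `|m| < β^p`. -/
def FloatReprSet (p n β : ℕ) : Set ℚ :=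
  {q | ∃ m : ℤ, m.natAbs < β ^ p ∧ ∃ e : ℤ, e.natAbs ≤ n ∧
    q = ((m : ℚ) / (β : ℚ) ^ p) * (β : ℚ) ^ e}

/-- `add` is a rounding addition for the finite set `D` of floats: the result of adding two
elements of `D` lies in `D` and is a nearest element of `D` to the exact rational sum
(this covers rounding to nearest, any tie-breaking rule, and capping overflow at the maximum). -/
def IsRoundingAdd (D : Set ℚ) (add : ℚ → ℚ → ℚ) : Prop :=
  ∀ x ∈ D, ∀ y ∈ D, add x y ∈ D ∧ ∀ d ∈ D, |add x y - (x + y)| ≤ |d - (x + y)|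

/-- The `k`-projection of a multiset: every multiplicity is capped at `k`. -/
noncomputable def capProj {α : Type*} (k : ℕ) (M : Multiset α) : Multiset α :=
  letI := Classical.decEq α
  M.toFinset.val.bind fun a => Multiset.replicate (min k (M.count a)) a

/-- Summing a multiset of rationals in increasing numerical order using the addition `add`. -/
noncomputable def sumInc (add : ℚ → ℚ → ℚ) (M : Multiset ℚ) : ℚ :=
  match M.sort (· ≤ ·) with
  | [] => 0
  | a :: l => l.foldl add a

/- ### Auxiliary lemmas -/

lemma count_capProj (k : ℕ) (M : Multiset ℚ) (x : ℚ) :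
    (capProj k M).count x = min k (M.count x) := by
  have hinst : Classical.decEq ℚ = instDecidableEqRat := Subsingleton.elim _ _
  unfold capProj
  rw [hinst]
  rw [Multiset.count_bind, Multiset.toFinset_val]
  by_cases hx : x ∈ M
  · rw [Multiset.sum_map_eq_nsmul_single x (by
      intro b hb hbm
      rw [Multiset.count_replicate, if_neg (fun h => hb h)])]
    rw [Multiset.count_replicate, if_pos rfl, Multiset.count_dedup, if_pos hx, one_smul]
  · have h0 : M.count x = 0 := Multiset.count_eq_zero.mpr hx
    rw [h0]
    simp only [Nat.min_zero]
    apply Multiset.sum_eq_zero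
    intro y hy
    obtain ⟨b, hb, rfl⟩ := Multiset.mem_map.mp hy
    rw [Multiset.count_replicate]
    split_ifs with h
    · subst h; exact absurd (Multiset.mem_dedup.mp hb) hx
    · rfl

lemma capProj_eq_self (k : ℕ) (M : Multiset ℚ) (h : ∀ x, M.count x ≤ k) :
    capProj k M = M := by
  apply Multiset.ext.mpr
  intro x
  rw [count_capProj]
  exact min_eq_right (h x)

lemma capProj_erase (k : ℕ) (M : Multiset ℚ) (a : ℚ) (h : k < M.count a) :
    capProj k (M.erase a) = capProj k M := by
  apply Multiset.ext.mpr
  intro x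
  rw [count_capProj, count_capProj]
  by_cases hx : x = a
  · subst hx
    rw [Multiset.count_erase_self]
    omega
  · rw [Multiset.count_erase_of_ne hx]

lemma floatReprSet_finite (p n β : ℕ) : (FloatReprSet p n β).Finite := by
  have h : FloatReprSet p n β ⊆
      (fun me : ℤ × ℤ => ((me.1 : ℚ) / (β : ℚ) ^ p) * (β : ℚ) ^ me.2) ''
        (Set.Icc (-(β ^ p : ℤ)) (β ^ p : ℤ) ×ˢ Set.Icc (-(n : ℤ)) (n : ℤ)) := by
    rintro q ⟨m, hm, e, he, rfl⟩
    refine ⟨(m, e), ⟨?_, ?_⟩, rfl⟩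
    · have h1 : |m| < (β ^ p : ℤ) := by
        rw [Int.abs_eq_natAbs]; exact_mod_cast hm
      simp only [Set.mem_Icc]
      constructor <;> [linarith [neg_abs_le m]; linarith [le_abs_self m]]
    · have h1 : |e| ≤ (n : ℤ) := by
        rw [Int.abs_eq_natAbs]; exact_mod_cast he
      simp only [Set.mem_Icc]
      constructor <;> [linarith [neg_abs_le e]; linarith [le_abs_self e]]
  exact Set.Finite.subset (((Set.finite_Icc _ _).prod (Set.finite_Icc _ _)).image _) h

lemma foldl_replicate (add : ℚ → ℚ → ℚ) (a : ℚ) (j : ℕ) (s : ℚ) :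
    (List.replicate j a).foldl add s = (fun t => add t a)^[j] s := by
  induction j generalizing s with
  | zero => simp
  | succ j ih => rw [List.replicate_succ, List.foldl_cons, ih, Function.iterate_succ_apply]

lemma foldl_mem (D : Set ℚ) (add : ℚ → ℚ → ℚ) (hadd : IsRoundingAdd D add) :
    ∀ (l : List ℚ) (s : ℚ), s ∈ D → (∀ x ∈ l, x ∈ D) → l.foldl add s ∈ D := by
  intro l
  induction l with
  | nil => intro s hs _; simpa using hs
  | cons b t ih =>
    intro s hs hl
    rw [List.foldl_cons]
    exact ih _ (hadd s hs b (hl b List.mem_cons_self)).1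
      (fun x hx => hl x (List.mem_cons_of_mem _ hx))

lemma stabilize (D : Set ℚ) (hD : D.Finite) (add : ℚ → ℚ → ℚ)
    (hadd : IsRoundingAdd D add) (a s : ℚ) (ha : a ∈ D) (hs : s ∈ D) :
    ∀ j, hD.toFinset.card ≤ j →
      (fun t => add t a)^[j] s = (fun t => add t a)^[hD.toFinset.card] s := by
  set N := hD.toFinset.card with hN
  set g : ℚ → ℚ := fun t => add t a with hg
  set u : ℕ → ℚ := fun j => g^[j] s with hu
  have hstep : ∀ j, u (j + 1) = add (u j) a := by
    intro j
    simp only [hu, Function.iterate_succ_apply', hg]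
  have humem : ∀ j, u j ∈ D := by
    intro j
    induction j with
    | zero => simpa [hu] using hs
    | succ j ih =>
      rw [hstep]
      exact (hadd _ ih a ha).1
  have hclose : ∀ j, |u (j + 1) - (u j + a)| ≤ |a| := by
    intro j
    rw [hstep]
    have h2 := (hadd (u j) (humem j) a ha).2 (u j) (humem j)
    calc |add (u j) a - (u j + a)| ≤ |u j - (u j + a)| := h2
      _ = |a| := by rw [show u j - (u j + a) = -a by ring, abs_neg]
  have hkey : ∃ i, i < N ∧ u i = u (i + 1) := by
    by_contra hcon
    push_neg at hcon
    have hcard : (Finset.range (N + 1)).card ≤ hD.toFinset.card := by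
      apply Finset.card_le_card_of_injOn u
        (fun j _ => (Set.Finite.mem_toFinset hD).mpr (humem j))
      rcases le_total 0 a with hA | hA
      · have hmono : Monotone u := by
          apply monotone_nat_of_le_succ
          intro j
          have h1 := hclose j
          rw [abs_le, abs_of_nonneg hA] at h1
          linarith [h1.1]
        have hstrict : ∀ i j, i < j → j ≤ N → u i < u j := by
          intro i j hij hjN
          exact lt_of_lt_of_le
            (lt_of_le_of_ne (hmono (Nat.le_succ i)) (hcon i (by omega)))
            (hmono hij)
        intro i hi j hj hij
        simp only [Finset.coe_range, Set.mem_Iio] at hi hj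
        rcases lt_trichotomy i j with h | h | h
        · exact absurd hij (ne_of_lt (hstrict i j h (by omega)))
        · exact h
        · exact absurd hij.symm (ne_of_lt (hstrict j i h (by omega)))
      · have hmono : Antitone u := by
          apply antitone_nat_of_succ_le
          intro j
          have h1 := hclose j
          rw [abs_le, abs_of_nonpos hA] at h1
          linarith [h1.2]
        have hstrict : ∀ i j, i < j → j ≤ N → u j < u i := by
          intro i j hij hjN
          exact lt_of_le_of_lt (hmono hij)
            (lt_of_le_of_ne (hmono (Nat.le_succ i)) (Ne.symm (hcon i (by omega))))
        intro i hi j hj hij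
        simp only [Finset.coe_range, Set.mem_Iio] at hi hj
        rcases lt_trichotomy i j with h | h | h
        · exact absurd hij (ne_of_gt (hstrict i j h (by omega)))
        · exact h
        · exact absurd hij.symm (ne_of_gt (hstrict j i h (by omega)))
    rw [Finset.card_range] at hcard
    omega
  obtain ⟨i, hiN, heq⟩ := hkey
  have hconst : ∀ j, i ≤ j → u j = u i := by
    intro j hj
    induction j, hj using Nat.le_induction with
    | base => rfl
    | succ j hj ih =>
      rw [hstep j, ih, ← hstep i]
      exact heq.symm
  intro j hjN
  show u j = u N
  rw [hconst j (by omega), hconst N (by omega)]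

lemma sort_decomp (M : Multiset ℚ) (a : ℚ) :
    M.sort (· ≤ ·) = (M.filter (· < a)).sort (· ≤ ·) ++
      (List.replicate (M.count a) a ++ (M.filter (a < ·)).sort (· ≤ ·)) := by
  refine List.Perm.eq_of_pairwise' (r := (· ≤ ·)) ?_ ?_ ?_
  rotate_right
  · rw [← Multiset.coe_eq_coe]
    simp only [← Multiset.coe_add, Multiset.coe_replicate, Multiset.sort_eq]
    apply Multiset.ext.mpr
    intro x
    simp only [Multiset.count_add, Multiset.count_filter, Multiset.count_replicate]
    rcases lt_trichotomy x a with h | h | h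
    · rw [if_pos h, if_neg (ne_of_gt h), if_neg (not_lt.mpr (le_of_lt h))]
      omega
    · subst h
      simp only [lt_irrefl, if_false, if_true, if_pos rfl]
      omega
    · rw [if_neg (not_lt.mpr (le_of_lt h)), if_neg (ne_of_lt h), if_pos h]
      omega
  · exact Multiset.pairwise_sort _ _
  · rw [List.pairwise_append]
    refine ⟨Multiset.pairwise_sort _ _, ?_, ?_⟩
    · rw [List.pairwise_append]
      refine ⟨List.pairwise_replicate.mpr (Or.inr le_rfl), Multiset.pairwise_sort _ _, ?_⟩
      intro x hx y hy
      have hxa : x = a := List.eq_of_mem_replicate hx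
      have hya : a < y := (Multiset.mem_filter.mp ((Multiset.mem_sort _).mp hy)).2
      rw [hxa]
      exact le_of_lt hya
    · intro x hx y hy
      have hxa : x < a := (Multiset.mem_filter.mp ((Multiset.mem_sort _).mp hx)).2
      rcases List.mem_append.mp hy with h | h
      · rw [List.eq_of_mem_replicate h]
        exact le_of_lt hxa
      · have hya : a < y := (Multiset.mem_filter.mp ((Multiset.mem_sort _).mp h)).2
        exact le_of_lt (lt_trans hxa hya)

lemma sumInc_eq_foldl (add : ℚ → ℚ → ℚ) (M : Multiset ℚ) (x : ℚ) (l : List ℚ)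
    (h : M.sort (· ≤ ·) = x :: l) : sumInc add M = l.foldl add x := by
  unfold sumInc
  rw [h]

lemma sumInc_erase (D : Set ℚ) (hD : D.Finite) (add : ℚ → ℚ → ℚ)
    (hadd : IsRoundingAdd D add) (M : Multiset ℚ) (hM : ∀ x ∈ M, x ∈ D)
    (a : ℚ) (hc : hD.toFinset.card + 3 ≤ M.count a) :
    sumInc add M = sumInc add (M.erase a) := by
  set N := hD.toFinset.card with hN
  have haM : a ∈ M := Multiset.count_pos.mp (by omega)
  have haD : a ∈ D := hM a haM
  set m := M.count a with hm
  have hf1 : (M.erase a).filter (· < a) = M.filter (· < a) := by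
    apply Multiset.ext.mpr
    intro x
    rw [Multiset.count_filter, Multiset.count_filter]
    split_ifs with h
    · exact Multiset.count_erase_of_ne (ne_of_lt h) M
    · rfl
  have hf2 : (M.erase a).filter (a < ·) = M.filter (a < ·) := by
    apply Multiset.ext.mpr
    intro x
    rw [Multiset.count_filter, Multiset.count_filter]
    split_ifs with h
    · exact Multiset.count_erase_of_ne (ne_of_gt h) M
    · rfl
  have hdecomp := sort_decomp M a
  have hdecomp' := sort_decomp (M.erase a) a
  rw [hf1, hf2, Multiset.count_erase_self, ← hm] at hdecomp'
  rw [← hm] at hdecomp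
  have hl₂D : ∀ x ∈ (M.filter (a < ·)).sort (· ≤ ·), x ∈ D :=
    fun x hx => hM x (Multiset.mem_of_mem_filter ((Multiset.mem_sort _).mp hx))
  rcases hL : (M.filter (· < a)).sort (· ≤ ·) with _ | ⟨b, t⟩
  · -- no elements below a
    rw [hL, List.nil_append] at hdecomp hdecomp'
    have hm1 : m = (m - 1) + 1 := by omega
    have hm2 : m - 1 = (m - 2) + 1 := by omega
    rw [show List.replicate m a = a :: List.replicate (m - 1) a by
        conv_lhs => rw [hm1]
        rw [List.replicate_succ]] at hdecomp
    rw [show List.replicate (m - 1) a = a :: List.replicate (m - 2) a by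
        conv_lhs => rw [hm2]
        rw [List.replicate_succ]] at hdecomp'
    rw [List.cons_append] at hdecomp hdecomp'
    rw [sumInc_eq_foldl add M a _ hdecomp, sumInc_eq_foldl add (M.erase a) a _ hdecomp']
    rw [List.foldl_append, List.foldl_append, foldl_replicate, foldl_replicate]
    congr 1
    rw [stabilize D hD add hadd a a haD haD (m - 1) (by omega),
        stabilize D hD add hadd a a haD haD (m - 2) (by omega)]
  · -- at least one element below a
    rw [hL, List.cons_append] at hdecomp hdecomp'
    rw [sumInc_eq_foldl add M b _ hdecomp, sumInc_eq_foldl add (M.erase a) b _ hdecomp']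
    rw [List.foldl_append, List.foldl_append, List.foldl_append, List.foldl_append,
        foldl_replicate, foldl_replicate]
    have hbt : ∀ x ∈ b :: t, x ∈ D := by
      intro x hx
      rw [← hL] at hx
      exact hM x (Multiset.mem_of_mem_filter ((Multiset.mem_sort _).mp hx))
    have hs₁ : t.foldl add b ∈ D :=
      foldl_mem D add hadd t b (hbt b List.mem_cons_self)
        (fun x hx => hbt x (List.mem_cons_of_mem _ hx))
    have hiter : (fun t => add t a)^[m] (t.foldl add b)
        = (fun t => add t a)^[m - 1] (t.foldl add b) := by
      rw [stabilize D hD add hadd a (t.foldl add b) haD hs₁ m (by omega),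
          stabilize D hD add hadd a (t.foldl add b) haD hs₁ (m - 1) (by omega)]
    rw [hiter]

/-- For every floating-point system (given by precision `p`, exponent range `n`,
base `β`, and a rounding addition `add` on its representable rationals), there exists `k ∈ ℕ`
such that for every multiset `M` of floats, summing `M` in increasing order equals summing the
`k`-projection of `M` in increasing order. -/
theorem floating_point_sum_bound
    (p n β : ℕ) (hp : 0 < p) (hβ : 2 ≤ β)
    (add : ℚ → ℚ → ℚ) (hadd : IsRoundingAdd (FloatReprSet p n β) add) :
    ∃ k : ℕ, ∀ M : Multiset ℚ, (∀ x ∈ M, x ∈ FloatReprSet p n β) →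
      sumInc add M = sumInc add (capProj k M) := by
  have hD : (FloatReprSet p n β).Finite := floatReprSet_finite p n β
  refine ⟨hD.toFinset.card + 2, ?_⟩
  intro M
  induction M using Multiset.strongInductionOn with
  | _ M IH =>
    intro hM
    by_cases hall : ∀ x, M.count x ≤ hD.toFinset.card + 2
    · rw [capProj_eq_self _ _ hall]
    · push_neg at hall
      obtain ⟨a, ha⟩ := hall
      have haM : a ∈ M := Multiset.count_pos.mp (by omega)
      rw [sumInc_erase _ hD add hadd M hM a (by omega),
          ← capProj_erase _ M a (by omega)]
      exact IH (M.erase a) (Multiset.erase_lt.mpr haM)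
        (fun x hx => hM x (Multiset.mem_of_mem_erase hx))
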